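/- For m ≥ 2, a word w with nonzero first letter x = w[0], and k ≥ |w|: for all 0 ≤ r < m^k, a_{m;w}(x·m^k + r) = a_{m;w}(r) + 1 (mod m) if α_w·m^k ≤ r < β_w·m^k, and a_{m;w}(x·m^k + r) = a_{m;w}(r) otherwise, where α_w = (w')_m / m^{|w|-1}, β_w = ((w')_m + 1)/m^{|w|-1}, and w' is w with its first letter removed. -/

import Mathlib

/-- Number of occurrences of the word `w` as a factor of the word `x`. -/
def occCount (w x : List ℕ) : ℕ :=
  (List.range (x.length + 1)).countP (fun i => decide (w <+: x.drop i))

/-- Base-`m` expansion of `n`, most significant digit first, with `0` written as the digit `0`. -/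
def baseExp (m n : ℕ) : List ℕ :=
  if n = 0 then [0] else (Nat.digits m n).reverse

/-- `e_{m;w}(n)`: number of occurrences of `w` in the base-`m` expansion of `n`. -/
def eCount (m : ℕ) (w : List ℕ) (n : ℕ) : ℕ := occCount w (baseExp m n)

/-- `a_{m;w}(n) = e_{m;w}(n) mod m`. -/
def aSeq (m : ℕ) (w : List ℕ) (n : ℕ) : ℕ := eCount m w n % m

/-- The value `(w)_m` of the digit string `w` in base `m`. -/
def wordVal (m : ℕ) (w : List ℕ) : ℕ := w.foldl (fun acc d => acc * m + d) 0

/-- The finite word `v` is a prefix of the infinite sequence `s`. -/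
def IsPrefixSeq (v : List ℕ) (s : ℕ → ℕ) : Prop := ∀ n < v.length, s n = v.getD n 0

namespace Stmt3Aux

lemma wordVal_foldl (m a : ℕ) (v : List ℕ) :
    v.foldl (fun acc d => acc * m + d) a = a * m ^ v.length + wordVal m v := by
  induction v generalizing a with
  | nil => simp [wordVal]
  | cons d v ih =>
    have hv : wordVal m (d :: v) = d * m ^ v.length + wordVal m v := by
      show List.foldl _ (0 * m + d) v = _
      rw [ih]; ring_nf
    simp only [List.foldl_cons, List.length_cons, hv]
    rw [ih]
    ring

lemma wordVal_cons (m d : ℕ) (v : List ℕ) :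
    wordVal m (d :: v) = d * m ^ v.length + wordVal m v := by
  show List.foldl _ (0 * m + d) v = _
  rw [wordVal_foldl]; ring_nf

lemma wordVal_append (m : ℕ) (u v : List ℕ) :
    wordVal m (u ++ v) = wordVal m u * m ^ v.length + wordVal m v := by
  unfold wordVal
  rw [List.foldl_append, wordVal_foldl]
  rfl

lemma wordVal_lt (m : ℕ) (v : List ℕ) (hm : 0 < m) (hv : ∀ d ∈ v, d < m) :
    wordVal m v < m ^ v.length := by
  induction v with
  | nil => simpa [wordVal] using Nat.one_le_iff_ne_zero.mpr (by positivity)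
  | cons d v ih =>
    rw [wordVal_cons]
    have h1 : wordVal m v < m ^ v.length := ih (fun d hd => hv d (List.mem_cons_of_mem _ hd))
    have h2 : d < m := hv d (List.mem_cons_self)
    calc d * m ^ v.length + wordVal m v < (d + 1) * m ^ v.length := by
          rw [add_mul, one_mul]; omega
      _ ≤ m * m ^ v.length := Nat.mul_le_mul_right _ (by omega)
      _ = m ^ (d :: v).length := by rw [List.length_cons, pow_succ]; ring

lemma wordVal_inj (m : ℕ) : ∀ (u v : List ℕ), u.length = v.length →
    (∀ d ∈ u, d < m) → (∀ d ∈ v, d < m) → wordVal m u = wordVal m v → u = v := by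
  intro u
  induction u with
  | nil => intro v h _ _ _; exact (List.length_eq_zero_iff.mp h.symm).symm
  | cons a u ih =>
    intro v hlen hu hv hval
    cases v with
    | nil => simp at hlen
    | cons b v =>
      have hm : 0 < m := by
        have := hu a (List.mem_cons_self); omega
      have hl : u.length = v.length := by simpa using hlen
      rw [wordVal_cons, wordVal_cons, hl] at hval
      have h1 : wordVal m u < m ^ v.length := by
        rw [← hl]; exact wordVal_lt m u hm (fun d hd => hu d (List.mem_cons_of_mem _ hd))
      have h2 : wordVal m v < m ^ v.length := wordVal_lt m v hm
        (fun d hd => hv d (List.mem_cons_of_mem _ hd))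
      have hM : 0 < m ^ v.length := by positivity
      have hab : a = b := by
        have ha : (a * m ^ v.length + wordVal m u) / m ^ v.length = a := by
          rw [mul_comm, Nat.mul_add_div hM, Nat.div_eq_of_lt h1, add_zero]
        have hb : (b * m ^ v.length + wordVal m v) / m ^ v.length = b := by
          rw [mul_comm, Nat.mul_add_div hM, Nat.div_eq_of_lt h2, add_zero]
        rw [← ha, ← hb, hval]
      subst hab
      have huv : u = v := ih v hl (fun d hd => hu d (List.mem_cons_of_mem _ hd))
        (fun d hd => hv d (List.mem_cons_of_mem _ hd)) (by omega)
      rw [huv]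

lemma wordVal_eq_ofDigits (m : ℕ) (v : List ℕ) :
    wordVal m v = Nat.ofDigits m v.reverse := by
  induction v with
  | nil => simp [wordVal, Nat.ofDigits]
  | cons d v ih =>
    rw [wordVal_cons, List.reverse_cons, Nat.ofDigits_append, ih,
      Nat.ofDigits_singleton, List.length_reverse]
    push_cast
    ring

lemma wordVal_replicate_zero (m j : ℕ) : wordVal m (List.replicate j 0) = 0 := by
  induction j with
  | zero => simp [wordVal]
  | succ j ih => rw [List.replicate_succ, wordVal_cons, ih]; simp

lemma occCount_cons (w : List ℕ) (a : ℕ) (s : List ℕ) :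
    occCount w (a :: s) = (if w <+: a :: s then 1 else 0) + occCount w s := by
  unfold occCount
  have : (a :: s).length + 1 = (s.length + 1) + 1 := by simp
  rw [this, List.range_succ_eq_map]
  rw [List.countP_cons, List.countP_map]
  have hc : List.countP ((fun i => decide (w <+: (a :: s).drop i)) ∘ Nat.succ)
      (List.range (s.length + 1)) =
      List.countP (fun i => decide (w <+: s.drop i)) (List.range (s.length + 1)) := rfl
  rw [hc]
  by_cases h : w <+: a :: s <;> simp [h] <;> omega

lemma headI_eq_of_prefix {w : List ℕ} (hw : w ≠ []) {a : ℕ} {s : List ℕ}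
    (h : w <+: a :: s) : w.headI = a := by
  cases w with
  | nil => exact absurd rfl hw
  | cons b t =>
    rw [List.cons_prefix_cons] at h
    simp [h.1]

lemma occCount_replicate_append (w : List ℕ) (hw : w ≠ []) (hh : w.headI ≠ 0)
    (j : ℕ) (s : List ℕ) :
    occCount w (List.replicate j 0 ++ s) = occCount w s := by
  induction j with
  | zero => simp
  | succ j ih =>
    rw [List.replicate_succ, List.cons_append, occCount_cons, ih, if_neg, zero_add]
    intro h
    exact hh (headI_eq_of_prefix hw h)

lemma occCount_nil (w : List ℕ) (hw : w ≠ []) : occCount w [] = 0 := by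
  unfold occCount
  simp [List.range_succ, hw]

lemma digits_len_le {m r k : ℕ} (hm : 2 ≤ m) (hr : r < m ^ k) :
    (Nat.digits m r).length ≤ k := by
  by_contra h
  push_neg at h
  rcases Nat.eq_zero_or_pos r with rfl | hr0
  · simp at h
  have h1 : m ^ (Nat.digits m r).length ≤ m * r :=
    Nat.base_pow_length_digits_le m r (by omega) (by omega)
  have h2 : m ^ (k + 1) ≤ m ^ (Nat.digits m r).length :=
    Nat.pow_le_pow_right (by omega) (by omega)
  rw [pow_succ] at h2
  have : m ^ k * m ≤ m * r := le_trans h2 h1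
  have : m ^ k ≤ r := by
    rw [mul_comm] at this
    exact Nat.le_of_mul_le_mul_left this (by omega)
  omega

end Stmt3Aux

open Stmt3Aux in
theorem stmt3 (m k : ℕ) (w : List ℕ) (hm : 2 ≤ m)
    (hw : ∀ d ∈ w, d < m) (hhead : w.headI ≠ 0) (hk : w.length ≤ k) :
    ∀ r < m ^ k,
      aSeq m w (w.headI * m ^ k + r) =
        if wordVal m w.tail * m ^ (k - (w.length - 1)) ≤ r ∧
            r < (wordVal m w.tail + 1) * m ^ (k - (w.length - 1)) then
          (aSeq m w r + 1) % m
        else aSeq m w r := by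
  intro r hr
  cases w with
  | nil => simp at hhead
  | cons x t =>
    simp only [List.headI_cons, List.tail_cons, List.length_cons,
      Nat.add_sub_cancel] at *
    have hx0 : x ≠ 0 := hhead
    have hxm : x < m := hw x (List.mem_cons_self)
    have hwne : (x :: t) ≠ ([] : List ℕ) := by simp
    have hm1 : 1 < m := by omega
    set dr := Nat.digits m r with hdr
    have hdlen : dr.length ≤ k := digits_len_le hm hr
    set j := k - dr.length with hj
    set e := k - t.length with he
    have ht : t.length + 1 ≤ k := hk
    -- digits of x * m^k + r
    have hdig : Nat.digits m (x * m ^ k + r) = dr ++ List.replicate j 0 ++ [x] := by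
      have h1 : Nat.digits m x = [x] := by
        rw [Nat.digits_def' hm1 (Nat.pos_of_ne_zero hx0), Nat.mod_eq_of_lt hxm,
          Nat.div_eq_of_lt hxm, Nat.digits_zero]
      have h2 := Nat.digits_append_zeroes_append_digits (b := m) (k := j) (n := r) (m := x)
        hm1 (Nat.pos_of_ne_zero hx0)
      rw [h1] at h2
      rw [← hdr] at h2
      have harg : x * m ^ k + r = r + m ^ (dr.length + j) * x := by
        have hjk : dr.length + j = k := by omega
        rw [hjk]; ring
      rw [harg, h2]
    set pad : List ℕ := List.replicate j 0 ++ dr.reverse with hpad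
    have hpadlen : pad.length = k := by
      simp [hpad]
      omega
    have hbase : baseExp m (x * m ^ k + r) = x :: pad := by
      have hne : x * m ^ k + r ≠ 0 := by
        have : 0 < m ^ k := by positivity
        have : 0 < x * m ^ k := Nat.mul_pos (Nat.pos_of_ne_zero hx0) this
        omega
      rw [baseExp, if_neg hne, hdig]
      simp [hpad]
    -- occurrence count in baseExp of r (without padding)
    have hocc_r : occCount (x :: t) dr.reverse = eCount m (x :: t) r := by
      rw [hdr]
      rcases Nat.eq_zero_or_pos r with rfl | hr0
      · rw [Nat.digits_zero, List.reverse_nil, eCount, baseExp, if_pos rfl]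
        have h01 : ([0] : List ℕ) = List.replicate 1 0 ++ [] := by simp
        rw [h01, occCount_replicate_append _ hwne hhead]
      · rw [eCount, baseExp, if_neg (by omega)]
    -- eCount of the shifted number
    have hE : eCount m (x :: t) (x * m ^ k + r) =
        (if t <+: pad then 1 else 0) + eCount m (x :: t) r := by
      rw [eCount, hbase, occCount_cons]
      have h1 : occCount (x :: t) pad = eCount m (x :: t) r := by
        rw [hpad, occCount_replicate_append _ hwne hhead]
        rw [hdr] at hocc_r
        exact hocc_r
      have h2 : ((x :: t) <+: x :: pad) ↔ (t <+: pad) := by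
        rw [List.cons_prefix_cons]; simp
      rw [if_congr h2 rfl rfl, h1]
    -- value of pad
    have hpadval : wordVal m pad = r := by
      rw [hpad, wordVal_append, wordVal_replicate_zero, wordVal_eq_ofDigits,
        List.reverse_reverse, Nat.ofDigits_digits]
      simp
    have hpaddig : ∀ d ∈ pad, d < m := by
      intro d hd
      rw [hpad, List.mem_append] at hd
      rcases hd with hd | hd
      · rw [List.eq_of_mem_replicate hd]; omega
      · exact Nat.digits_lt_base hm1 (List.mem_reverse.mp hd)
    have htdig : ∀ d ∈ t, d < m := fun d hd => hw d (List.mem_cons_of_mem _ hd)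
    have hMe : 0 < m ^ e := by positivity
    -- the prefix condition
    have hiff : (t <+: pad) ↔
        wordVal m t * m ^ e ≤ r ∧ r < (wordVal m t + 1) * m ^ e := by
      constructor
      · rintro ⟨rest, hrest⟩
        have hrl : rest.length = e := by
          have := congrArg List.length hrest
          simp [hpadlen] at this
          omega
        rw [← hrest, wordVal_append, hrl] at hpadval
        have hrlt : wordVal m rest < m ^ e := by
          rw [← hrl]
          exact wordVal_lt m rest (by omega) (fun d hd => hpaddig d (by
            rw [← hrest]; exact List.mem_append_right _ hd))
        constructor
        · omega
        · rw [add_mul, one_mul]; omega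
      · rintro ⟨h1, h2⟩
        set u := pad.take t.length with hu
        set rest := pad.drop t.length with hrest
        have hsplit : u ++ rest = pad := List.take_append_drop _ _
        have hul : u.length = t.length := by
          rw [hu, List.length_take, hpadlen]
          omega
        have hrl : rest.length = e := by
          rw [hrest, List.length_drop, hpadlen]
        have hval : wordVal m u * m ^ e + wordVal m rest = r := by
          rw [← hpadval, ← hsplit, wordVal_append, hrl]
        have hrlt : wordVal m rest < m ^ e := by
          rw [← hrl]
          exact wordVal_lt m rest (by omega) (fun d hd => hpaddig d (by
            rw [← hsplit]; exact List.mem_append_right _ hd))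
        have hudig : ∀ d ∈ u, d < m := fun d hd => hpaddig d (by
          rw [← hsplit]; exact List.mem_append_left _ hd)
        have heq : wordVal m u = wordVal m t := by
          set A := wordVal m u
          set B := wordVal m t
          have hAB1 : A < B + 1 := by
            by_contra hc
            push_neg at hc
            have : (B + 1) * m ^ e ≤ A * m ^ e := Nat.mul_le_mul_right _ hc
            omega
          have hAB2 : B < A + 1 := by
            have : B * m ^ e < (A + 1) * m ^ e := by
              rw [add_mul, one_mul]; omega
            exact Nat.lt_of_mul_lt_mul_right this
          omega
        have hut : u = t := wordVal_inj m u t (by omega) hudig htdig heq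
        exact ⟨rest, by rw [← hut, hsplit]⟩
    -- conclude
    show aSeq m (x :: t) (x * m ^ k + r) = _
    simp only [aSeq]
    rw [hE]
    by_cases hc : wordVal m t * m ^ e ≤ r ∧ r < (wordVal m t + 1) * m ^ e
    · rw [if_pos (hiff.mpr hc), if_pos hc]
      rw [Nat.add_comm 1 _, Nat.add_mod (eCount m (x :: t) r) 1 m,
        Nat.mod_eq_of_lt (show 1 < m by omega)]
    · rw [if_neg (fun h => hc (hiff.mp h)), if_neg hc, zero_add]
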